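/- Let k be an even integer with k ≥ 4, let d = (3k+4)/2, and let C be a symmetric (d,k) circuit code of length 4k+6 whose transition sequence has the form T(C) = (ω₁, x, ω₂, ω₁, x, ω₂), where ω₁ = (1,2,...,k+2) and ω₂ = (β₁,...,β_k). If x ∈ {1,2}, then the segment (ω₂, 1, 2) of T(C) is a bit run, i.e., the k+2 entries β₁,...,β_k, 1, 2 are pairwise distinct. -/

import Mathlib

/-- The graph of the `d`-dimensional hypercube: vertices are binary vectors of
length `d`, adjacent iff they differ in exactly one coordinate. -/
def hypercube (d : ℕ) : SimpleGraph (Fin d → Bool) where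
  Adj x y := hammingDist x y = 1
  symm := by
    constructor
    intro x y h
    rwa [hammingDist_comm]
  loopless := by
    constructor
    intro x h
    simp [hammingDist_self] at h

/-- Distance along a cycle of length `N` between positions `i` and `j`. -/
def cycDist {N : ℕ} (i j : ZMod N) : ℕ := min (i - j).val (j - i).val

/-- `x : ZMod N → (Fin d → Bool)` is a `(d,k)` circuit code of length `N`:
a cycle in the hypercube `I(d)` satisfying the spread-`k` distance requirement. -/
structure IsCircuitCode (d k N : ℕ) (x : ZMod N → Fin d → Bool) : Prop where
  inj : Function.Injective x
  adj : ∀ i : ZMod N, (hypercube d).Adj (x i) (x (i + 1))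
  spread : ∀ i j : ZMod N, min (cycDist i j) k ≤ (hypercube d).dist (x i) (x j)

/-- `τ` is the transition sequence of the cycle `x`: `τ i` is the unique
coordinate in which `x i` and `x (i+1)` differ. -/
def IsTransitionSeq {d N : ℕ} (x : ZMod N → Fin d → Bool) (τ : ZMod N → Fin d) : Prop :=
  ∀ (i : ZMod N) (j : Fin d), x (i + 1) j ≠ x i j ↔ j = τ i

/-- The segment of `τ` of length `m` starting at position `start` is a bit run:
all of its entries are distinct. -/
def IsBitRun {d N : ℕ} (τ : ZMod N → Fin d) (start : ZMod N) (m : ℕ) : Prop :=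
  ∀ a b : Fin m, τ (start + ((a : ℕ) : ZMod N)) = τ (start + ((b : ℕ) : ZMod N)) → a = b

/-- `δ(ω)`: the number of coordinates appearing an odd number of times in the
segment of `τ` of length `m` starting at `start`. -/
def segDelta {d N : ℕ} (τ : ZMod N → Fin d) (start : ZMod N) (m : ℕ) : ℕ :=
  (Finset.univ.filter fun c : Fin d =>
    Odd (Finset.univ.filter fun t : Fin m => τ (start + ((t : ℕ) : ZMod N)) = c).card).card

/- ----------------- auxiliary lemmas ----------------- -/

lemma exists_walk_hamming {d : ℕ} : ∀ (n : ℕ) (x y : Fin d → Bool), hammingDist x y = n →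
    ∃ p : (hypercube d).Walk x y, p.length = n := by
  intro n
  induction n with
  | zero =>
    intro x y h
    rw [hammingDist_eq_zero] at h
    subst h
    exact ⟨SimpleGraph.Walk.nil, rfl⟩
  | succ n ih =>
    intro x y h
    have hne : hammingDist x y ≠ 0 := by omega
    have : ∃ i, x i ≠ y i := by
      by_contra hc
      push_neg at hc
      exact hne (by rw [show x = y from funext hc, hammingDist_self])
    obtain ⟨i, hi⟩ := this
    set y' := Function.update y i (x i) with hy'
    have hmem : i ∈ ({j | x j ≠ y j} : Finset (Fin d)) := by
      simp [hi]
    have hset : ({j | x j ≠ y' j} : Finset (Fin d))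
        = ({j | x j ≠ y j} : Finset (Fin d)).erase i := by
      ext j
      by_cases hji : j = i
      · subst hji
        simp [hy', Function.update_self]
      · simp [hy', Function.update_of_ne hji, hji]
    have h1 : hammingDist x y' = n := by
      show ({j | x j ≠ y' j} : Finset (Fin d)).card = n
      rw [hset, Finset.card_erase_of_mem hmem]
      have : hammingDist x y = ({j | x j ≠ y j} : Finset (Fin d)).card := rfl
      omega
    have hadj : (hypercube d).Adj y' y := by
      show hammingDist y' y = 1
      have : ({j | y' j ≠ y j} : Finset (Fin d)) = {i} := by
        ext j
        by_cases hji : j = i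
        · subst hji; simp [hy', Function.update_self, hi]
        · simp [hy', Function.update_of_ne hji, hji]
      show ({j | y' j ≠ y j} : Finset (Fin d)).card = 1
      rw [this, Finset.card_singleton]
    obtain ⟨p, hp⟩ := ih x y' h1
    exact ⟨p.concat hadj, by rw [SimpleGraph.Walk.length_concat, hp]⟩

lemma dist_le_hamming {d : ℕ} (x y : Fin d → Bool) :
    (hypercube d).dist x y ≤ hammingDist x y := by
  obtain ⟨p, hp⟩ := exists_walk_hamming (hammingDist x y) x y rfl
  simpa [hp] using SimpleGraph.dist_le p

lemma flip_iff {d N : ℕ} {x : ZMod N → Fin d → Bool} {τ : ZMod N → Fin d}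
    (hτ : IsTransitionSeq x τ) (s : ZMod N) :
    ∀ (m : ℕ) (j : Fin d), (x (s + (m : ZMod N)) j ≠ x s j ↔
      Odd (Finset.univ.filter fun t : Fin m => τ (s + ((t : ℕ) : ZMod N)) = j).card) := by
  intro m
  induction m with
  | zero => intro j; simp
  | succ m ih =>
    intro j
    have hcard : (Finset.univ.filter fun t : Fin (m+1) => τ (s + ((t : ℕ) : ZMod N)) = j).card
        = (Finset.univ.filter fun t : Fin m => τ (s + ((t : ℕ) : ZMod N)) = j).card
          + (if τ (s + (m : ZMod N)) = j then 1 else 0) := by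
      rw [Finset.card_filter, Finset.card_filter, Fin.sum_univ_castSucc]
      simp [Fin.coe_castSucc, Fin.val_last]
    have hstep := hτ (s + (m : ZMod N)) j
    have hcast : s + ((m+1 : ℕ) : ZMod N) = s + (m : ZMod N) + 1 := by
      push_cast; ring
    rw [hcast, hcard]
    by_cases hj : τ (s + (m : ZMod N)) = j
    · have hAB : x (s + (m : ZMod N) + 1) j ≠ x (s + (m : ZMod N)) j := hstep.mpr hj.symm
      simp only [hj, if_pos]
      rw [Nat.odd_add_one, ← ih j]
      rcases Bool.eq_false_or_eq_true (x (s + (m : ZMod N) + 1) j) with h1 | h1 <;>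
        rcases Bool.eq_false_or_eq_true (x (s + (m : ZMod N)) j) with h2 | h2 <;>
        rcases Bool.eq_false_or_eq_true (x s j) with h3 | h3 <;>
        simp_all
    · have hAB : x (s + (m : ZMod N) + 1) j = x (s + (m : ZMod N)) j := by
        by_contra hc
        exact hj (hstep.mp hc).symm
      simp only [hj, if_neg, Nat.add_zero, if_false]
      rw [hAB]
      exact ih j

lemma hamming_eq_segDelta {d N : ℕ} {x : ZMod N → Fin d → Bool} {τ : ZMod N → Fin d}
    (hτ : IsTransitionSeq x τ) (s : ZMod N) (m : ℕ) :
    hammingDist (x s) (x (s + (m : ZMod N))) = segDelta τ s m := by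
  show ({j | x s j ≠ x (s + (m : ZMod N)) j} : Finset (Fin d)).card = _
  unfold segDelta
  congr 1
  ext j
  simp only [Finset.mem_filter, Finset.mem_univ, true_and]
  rw [ne_comm]
  constructor
  · intro h; exact (flip_iff hτ s m j).mp h
  · intro h; exact (flip_iff hτ s m j).mpr h

lemma count_core {α : Type*} [Fintype α] [DecidableEq α] (w : α → ℕ) (P : Finset α)
    (hP : ∀ c ∈ P, 2 ≤ w c) :
    (Finset.univ.filter fun c => Odd (w c)).card + 2 * P.card ≤ ∑ c, w c := by
  have key : ∀ c : α, (if Odd (w c) then 1 else 0) + (if c ∈ P then 2 else 0) ≤ w c := by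
    intro c
    by_cases h1 : Odd (w c) <;> by_cases h2 : c ∈ P <;> simp [h1, h2]
    · obtain ⟨j, hj⟩ := h1
      have := hP c h2
      omega
    · obtain ⟨j, hj⟩ := h1
      omega
    · exact hP c h2
  calc (Finset.univ.filter fun c => Odd (w c)).card + 2 * P.card
      = (∑ c, if Odd (w c) then 1 else 0) + ∑ c, (if c ∈ P then 2 else 0) := by
        rw [Finset.card_filter]
        congr 1
        rw [Finset.sum_ite_mem, Finset.univ_inter, Finset.sum_const, smul_eq_mul, mul_comm]
    _ = ∑ c, ((if Odd (w c) then 1 else 0) + (if c ∈ P then 2 else 0)) := by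
        rw [Finset.sum_add_distrib]
    _ ≤ ∑ c, w c := Finset.sum_le_sum fun c _ => key c

lemma segDelta_add_le {d N : ℕ} (τ : ZMod N → Fin d) (s : ZMod N) (m : ℕ)
    (P : Finset (Fin d))
    (hP : ∀ c ∈ P, ∃ t1 t2 : Fin m, t1 ≠ t2 ∧
      τ (s + ((t1 : ℕ) : ZMod N)) = c ∧ τ (s + ((t2 : ℕ) : ZMod N)) = c) :
    segDelta τ s m + 2 * P.card ≤ m := by
  set w : Fin d → ℕ := fun c =>
    (Finset.univ.filter fun t : Fin m => τ (s + ((t : ℕ) : ZMod N)) = c).card with hw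
  have hsum : ∑ c, w c = m := by
    rw [← Finset.card_eq_sum_card_fiberwise (fun t _ => Finset.mem_univ _)]
    simp
  have hP' : ∀ c ∈ P, 2 ≤ w c := by
    intro c hc
    obtain ⟨t1, t2, hne, h1, h2⟩ := hP c hc
    rw [hw]
    refine Finset.one_lt_card.mpr ⟨t1, ?_, t2, ?_, hne⟩ <;> simp [h1, h2]
  have := count_core w P hP'
  rw [hsum] at this
  exact this

lemma cycDist_self_add {N : ℕ} (s : ZMod N) (m : ℕ) (h1 : 1 ≤ m) (h2 : 2 * m ≤ N) :
    cycDist s (s + (m : ZMod N)) = m := by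
  haveI : NeZero N := ⟨by omega⟩
  have hmN : m < N := by omega
  have hval : ((m : ZMod N)).val = m := ZMod.val_cast_of_lt hmN
  have hneg : (s - (s + (m : ZMod N))) = ((N - m : ℕ) : ZMod N) := by
    have hN0 : ((N : ℕ) : ZMod N) = 0 := ZMod.natCast_self N
    have hNm : ((N - m : ℕ) : ZMod N) + (m : ZMod N) = 0 := by
      rw [← Nat.cast_add, Nat.sub_add_cancel (by omega), hN0]
    rw [eq_neg_of_add_eq_zero_left hNm]; ring
  have hvneg : ((N - m : ℕ) : ZMod N).val = N - m := ZMod.val_cast_of_lt (by omega)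
  unfold cycDist
  rw [hneg, hvneg, add_sub_cancel_left, hval]
  omega

lemma spread_delta {d k N : ℕ} {x : ZMod N → Fin d → Bool}
    (hx : IsCircuitCode d k N x) {τ : ZMod N → Fin d} (hτ : IsTransitionSeq x τ)
    (s : ZMod N) (m : ℕ) (h1 : 1 ≤ m) (h2 : 2 * m ≤ N) :
    min m k ≤ segDelta τ s m := by
  have hs := hx.spread s (s + (m : ZMod N))
  rw [cycDist_self_add s m h1 h2] at hs
  calc min m k ≤ (hypercube d).dist (x s) (x (s + (m : ZMod N))) := hs
    _ ≤ hammingDist (x s) (x (s + (m : ZMod N))) := dist_le_hamming _ _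
    _ = segDelta τ s m := hamming_eq_segDelta hτ s m

lemma no_close_repeat {d k N : ℕ} {x : ZMod N → Fin d → Bool}
    (hx : IsCircuitCode d k N x) {τ : ZMod N → Fin d} (hτ : IsTransitionSeq x τ)
    (s : ZMod N) (m : ℕ) (h1 : 1 ≤ m) (hmk : m + 1 ≤ k) (h2 : 2 * (m + 1) ≤ N)
    (heq : τ (s + (m : ZMod N)) = τ s) : False := by
  have hb := segDelta_add_le τ s (m+1) {τ s} ?_
  · have hlow := spread_delta hx hτ s (m+1) (by omega) h2
    rw [min_eq_left hmk] at hlow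
    simp only [Finset.card_singleton] at hb
    omega
  · intro c hc
    rw [Finset.mem_singleton] at hc
    refine ⟨⟨0, by omega⟩, ⟨m, by omega⟩, ?_, ?_, ?_⟩
    · intro hcon
      have := congrArg Fin.val hcon
      simp at this
      omega
    · simpa using hc.symm
    · rw [hc]; exact heq

/-- For even `k ≥ 4`, `d = (3k+4)/2`, and a symmetric `(d,k)` circuit code of length
`4k+6` whose transition sequence has the form `(ω₁, x, ω₂, ω₁, x, ω₂)` with
`ω₁ = (1,...,k+2)` (coordinates modeled 0-based as `Fin d`): if the transition `x`
(at position `k+2`) is the coordinate `1` or `2` (0-based value `0` or `1`), then the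
segment `(ω₂, 1, 2)` (starting at position `k+3`, of length `k+2`) is a bit run. -/
theorem stmt_14 (k d : ℕ) (hk : Even k) (hk4 : 4 ≤ k) (hd : 2 * d = 3 * k + 4)
    (x : ZMod (4 * k + 6) → Fin d → Bool)
    (hx : IsCircuitCode d k (4 * k + 6) x)
    (τ : ZMod (4 * k + 6) → Fin d) (hτ : IsTransitionSeq x τ)
    (hsym : ∀ i : ZMod (4 * k + 6), τ (i + ((2 * k + 3 : ℕ) : ZMod (4 * k + 6))) = τ i)
    (hω₁ : ∀ i : ℕ, i ≤ k + 1 → (τ ((i : ℕ) : ZMod (4 * k + 6))).val = i)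
    (hx12 : (τ ((k + 2 : ℕ) : ZMod (4 * k + 6))).val = 0 ∨
            (τ ((k + 2 : ℕ) : ZMod (4 * k + 6))).val = 1) :
    IsBitRun τ ((k + 3 : ℕ) : ZMod (4 * k + 6)) (k + 2) := by
  -- transporting the symmetry to natural-number positions
  have hshift : ∀ t : ℕ, τ ((t + (2*k+3) : ℕ) : ZMod (4*k+6)) = τ ((t : ℕ) : ZMod (4*k+6)) := by
    intro t
    have h := hsym ((t : ℕ) : ZMod (4*k+6))
    rw [show ((t : ℕ) : ZMod (4*k+6)) + ((2*k+3 : ℕ) : ZMod (4*k+6)) = ((t + (2*k+3) : ℕ) : ZMod (4*k+6)) by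
      push_cast; ring] at h
    exact h
  have hs0 : τ ((2*k+3 : ℕ) : ZMod (4*k+6)) = τ ((0 : ℕ) : ZMod (4*k+6)) := by
    have := hshift 0
    rwa [show 0 + (2*k+3) = 2*k+3 by omega] at this
  have hs1 : τ ((2*k+4 : ℕ) : ZMod (4*k+6)) = τ ((1 : ℕ) : ZMod (4*k+6)) := by
    have := hshift 1
    rwa [show 1 + (2*k+3) = 2*k+4 by omega] at this
  have v0 : (τ ((2*k+3 : ℕ) : ZMod (4*k+6))).val = 0 := by rw [hs0]; exact hω₁ 0 (by omega)
  have v1 : (τ ((2*k+4 : ℕ) : ZMod (4*k+6))).val = 1 := by rw [hs1]; exact hω₁ 1 (by omega)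
  have hc12 : τ ((2*k+3 : ℕ) : ZMod (4*k+6)) ≠ τ ((2*k+4 : ℕ) : ZMod (4*k+6)) := by
    intro h
    rw [h, v1] at v0
    omega
  -- specialized "no close repeat" at natural positions
  have E : ∀ p m : ℕ, 1 ≤ m → m + 1 ≤ k →
      τ ((p + m : ℕ) : ZMod (4*k+6)) = τ ((p : ℕ) : ZMod (4*k+6)) → False := by
    intro p m h1 h2 heq
    refine no_close_repeat hx hτ ((p : ℕ) : ZMod (4*k+6)) m h1 h2 (by omega) ?_
    rw [show ((p : ℕ) : ZMod (4*k+6)) + ((m : ℕ) : ZMod (4*k+6)) = ((p + m : ℕ) : ZMod (4*k+6)) by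
      push_cast; ring]
    exact heq
  -- main contradiction via two disjoint pairs in the segment of length k+3 at k+2
  have F : ∀ t1 t2 u1 u2 : ℕ, t1 < k+3 → t2 < k+3 → u1 < k+3 → u2 < k+3 →
      t1 ≠ t2 → u1 ≠ u2 → ∀ c1 c2 : Fin d, c1 ≠ c2 →
      τ ((k+2+t1 : ℕ) : ZMod (4*k+6)) = c1 → τ ((k+2+t2 : ℕ) : ZMod (4*k+6)) = c1 →
      τ ((k+2+u1 : ℕ) : ZMod (4*k+6)) = c2 → τ ((k+2+u2 : ℕ) : ZMod (4*k+6)) = c2 → False := by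
    intro t1 t2 u1 u2 ht1 ht2 hu1 hu2 htne hune c1 c2 hc ha1 ha2 hb1 hb2
    have hcast : ∀ (t : ℕ) (h : t < k+3),
        ((k+2 : ℕ) : ZMod (4*k+6)) + (((⟨t, h⟩ : Fin (k+3)) : ℕ) : ZMod (4*k+6))
          = ((k+2+t : ℕ) : ZMod (4*k+6)) := by
      intro t h
      push_cast
      ring
    have hb := segDelta_add_le τ ((k+2 : ℕ) : ZMod (4*k+6)) (k+3) {c1, c2} ?_
    · have hlow := spread_delta hx hτ ((k+2 : ℕ) : ZMod (4*k+6)) (k+3) (by omega) (by omega)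
      rw [min_eq_right (by omega)] at hlow
      rw [Finset.card_insert_of_notMem (by simpa using hc), Finset.card_singleton] at hb
      omega
    · intro c hcm
      rw [Finset.mem_insert, Finset.mem_singleton] at hcm
      rcases hcm with rfl | rfl
      · refine ⟨⟨t1, ht1⟩, ⟨t2, ht2⟩, ?_, ?_, ?_⟩
        · intro hcon; exact htne (congrArg Fin.val hcon)
        · rw [hcast t1 ht1]; exact ha1
        · rw [hcast t2 ht2]; exact ha2
      · refine ⟨⟨u1, hu1⟩, ⟨u2, hu2⟩, ?_, ?_, ?_⟩
        · intro hcon; exact hune (congrArg Fin.val hcon)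
        · rw [hcast u1 hu1]; exact hb1
        · rw [hcast u2 hu2]; exact hb2
  -- the core claim for ordered pairs
  have main : ∀ a b : ℕ, a < b → b ≤ k+1 →
      τ ((k+3+a : ℕ) : ZMod (4*k+6)) = τ ((k+3+b : ℕ) : ZMod (4*k+6)) → False := by
    intro a b hab hb1 heq
    by_cases hm : b - a ≤ k - 1
    · refine E (k+3+a) (b-a) (by omega) (by omega) ?_
      rw [show k+3+a+(b-a) = k+3+b by omega]
      exact heq.symm
    · have hcases : (a = 0 ∧ b = k) ∨ (a = 1 ∧ b = k+1) ∨ (a = 0 ∧ b = k+1) := by omega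
      rcases hcases with ⟨ha, hb⟩ | ⟨ha, hb⟩ | ⟨ha, hb⟩ <;> rw [ha, hb] at heq
      · -- τ(k+3) = τ(2k+3), coordinate of value 0
        rw [show k+3+0 = k+3 by omega, show k+3+k = 2*k+3 by omega] at heq
        rcases hx12 with hv | hv
        · -- x has value 0 : τ(k+2) = τ(2k+3) = τ(k+3), close repeat
          have e1 : τ ((k+2 : ℕ) : ZMod (4*k+6)) = τ ((2*k+3 : ℕ) : ZMod (4*k+6)) :=
            Fin.val_injective (by rw [hv, v0])
          exact E (k+2) 1 (by omega) (by omega)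
            (by rw [show k+2+1 = k+3 by omega]; exact heq.trans e1.symm)
        · -- x has value 1 : pairs (k+3, 2k+3) for c1 and (k+2, 2k+4) for c2
          have e1 : τ ((k+2 : ℕ) : ZMod (4*k+6)) = τ ((2*k+4 : ℕ) : ZMod (4*k+6)) :=
            Fin.val_injective (by rw [hv, v1])
          refine F 1 (k+1) 0 (k+2) (by omega) (by omega) (by omega) (by omega)
            (by omega) (by omega) (τ ((2*k+3 : ℕ) : ZMod (4*k+6))) (τ ((2*k+4 : ℕ) : ZMod (4*k+6)))
            hc12 ?_ ?_ ?_ ?_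
          · rw [show k+2+1 = k+3 by omega]; exact heq
          · rw [show k+2+(k+1) = 2*k+3 by omega]
          · rw [show k+2+0 = k+2 by omega]; exact e1
          · rw [show k+2+(k+2) = 2*k+4 by omega]
      · -- τ(k+4) = τ(2k+4), coordinate of value 1
        rw [show k+3+1 = k+4 by omega, show k+3+(k+1) = 2*k+4 by omega] at heq
        rcases hx12 with hv | hv
        · -- x has value 0 : pairs (k+4, 2k+4) for c1 and (k+2, 2k+3) for c2
          have e1 : τ ((k+2 : ℕ) : ZMod (4*k+6)) = τ ((2*k+3 : ℕ) : ZMod (4*k+6)) :=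
            Fin.val_injective (by rw [hv, v0])
          refine F 2 (k+2) 0 (k+1) (by omega) (by omega) (by omega) (by omega)
            (by omega) (by omega) (τ ((2*k+4 : ℕ) : ZMod (4*k+6))) (τ ((2*k+3 : ℕ) : ZMod (4*k+6)))
            (Ne.symm hc12) ?_ ?_ ?_ ?_
          · rw [show k+2+2 = k+4 by omega]; exact heq
          · rw [show k+2+(k+2) = 2*k+4 by omega]
          · rw [show k+2+0 = k+2 by omega]; exact e1
          · rw [show k+2+(k+1) = 2*k+3 by omega]
        · -- x has value 1 : τ(k+2) = τ(2k+4) = τ(k+4), close repeat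
          have e1 : τ ((k+2 : ℕ) : ZMod (4*k+6)) = τ ((2*k+4 : ℕ) : ZMod (4*k+6)) :=
            Fin.val_injective (by rw [hv, v1])
          exact E (k+2) 2 (by omega) (by omega)
            (by rw [show k+2+2 = k+4 by omega]; exact heq.trans e1.symm)
      · -- τ(k+3) = τ(2k+4), coordinate of value 1
        rw [show k+3+0 = k+3 by omega, show k+3+(k+1) = 2*k+4 by omega] at heq
        rcases hx12 with hv | hv
        · -- x has value 0 : pairs (k+3, 2k+4) for c1 and (k+2, 2k+3) for c2
          have e1 : τ ((k+2 : ℕ) : ZMod (4*k+6)) = τ ((2*k+3 : ℕ) : ZMod (4*k+6)) :=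
            Fin.val_injective (by rw [hv, v0])
          refine F 1 (k+2) 0 (k+1) (by omega) (by omega) (by omega) (by omega)
            (by omega) (by omega) (τ ((2*k+4 : ℕ) : ZMod (4*k+6))) (τ ((2*k+3 : ℕ) : ZMod (4*k+6)))
            (Ne.symm hc12) ?_ ?_ ?_ ?_
          · rw [show k+2+1 = k+3 by omega]; exact heq
          · rw [show k+2+(k+2) = 2*k+4 by omega]
          · rw [show k+2+0 = k+2 by omega]; exact e1
          · rw [show k+2+(k+1) = 2*k+3 by omega]
        · -- x has value 1 : τ(k+2) = τ(2k+4) = τ(k+3), close repeat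
          have e1 : τ ((k+2 : ℕ) : ZMod (4*k+6)) = τ ((2*k+4 : ℕ) : ZMod (4*k+6)) :=
            Fin.val_injective (by rw [hv, v1])
          exact E (k+2) 1 (by omega) (by omega)
            (by rw [show k+2+1 = k+3 by omega]; exact heq.trans e1.symm)
  -- conclude
  intro a b hab
  by_contra hne
  have hcast : ∀ t : ℕ, ((k+3 : ℕ) : ZMod (4*k+6)) + ((t : ℕ) : ZMod (4*k+6)) = ((k+3+t : ℕ) : ZMod (4*k+6)) := by
    intro t; push_cast; ring
  rw [hcast (a : ℕ), hcast (b : ℕ)] at hab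
  have hvne : (a : ℕ) ≠ (b : ℕ) := fun hv => hne (Fin.ext hv)
  rcases Nat.lt_or_ge (a : ℕ) (b : ℕ) with h | h
  · exact main (a : ℕ) (b : ℕ) h (by omega) hab
  · exact main (b : ℕ) (a : ℕ) (by omega) (by omega) hab.symm
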